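/- Let n = 2ᵇ, K = ℚ(ζ) with ζ a primitive 2^{b+2}-th root of unity, F = ℚ(i), and σ a generator of Gal(K/F). Then the n×n matrix U with entries U_{j,k} = (1/√n)·σ^{j}(ζ^{k}) (for 0 ≤ j,k ≤ n−1) is unitary. -/

import Mathlib

set_option maxHeartbeats 1000000

open Complex IntermediateField Matrix

open Polynomial

/-- `F = ℚ(i)` as a subfield of `ℂ`. -/
noncomputable def QI : IntermediateField ℚ ℂ := ℚ⟮Complex.I⟯


lemma isPrimitiveRoot_I : IsPrimitiveRoot Complex.I 4 := by
  convert Complex.isPrimitiveRoot_exp 4 (by norm_num) using 1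
  rw [show ((4:ℕ):ℂ) = (4:ℂ) by norm_num]
  rw [show (2 * Real.pi * I / 4 : ℂ) = (Real.pi/2 : ℝ) * I by push_cast; ring]
  simp [Complex.exp_mul_I, Real.cos_pi_div_two, Real.sin_pi_div_two]

lemma aux_cyc {F : Type*} [Field F] [Algebra F ℂ] (N : ℕ+) {z : ℂ}
    (hz : IsPrimitiveRoot z (N : ℕ)) :
    IsCyclotomicExtension {(N : ℕ)} F (IntermediateField.adjoin F {z}) := by
  haveI : NeZero (N : ℕ) := ⟨N.pos.ne'⟩
  have hint : IsIntegral F z := by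
    refine ⟨X ^ (N:ℕ) - 1, monic_X_pow_sub_C 1 (by exact_mod_cast N.pos.ne' : (N:ℕ) ≠ 0), ?_⟩
    simp [hz.pow_eq_one]
  have H := IntermediateField.adjoin_simple_toSubalgebra_of_isAlgebraic hint.isAlgebraic
  refine IsCyclotomicExtension.equiv _ _ _ (h := ?_) (.refl : F⟮z⟯.toSubalgebra ≃ₐ[F] _)
  rw [H]
  exact hz.adjoin_isCyclotomicExtension F

lemma finrank_QI : Module.finrank ℚ QI = 2 := by
  have inst : IsCyclotomicExtension {((4:ℕ+):ℕ)} ℚ QI :=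
    aux_cyc 4 (show IsPrimitiveRoot Complex.I ((4:ℕ+):ℕ) from _root_.isPrimitiveRoot_I)
  have := IsCyclotomicExtension.finrank (n := ((4:ℕ+):ℕ)) (K := ℚ) (L := QI)
    (Polynomial.cyclotomic.irreducible_rat (by norm_num))
  simpa [show Nat.totient 4 = 2 by decide] using this

lemma finrank_adjoin (b : ℕ) {ζ : ℂ} (hζ : IsPrimitiveRoot ζ (2 ^ (b + 2))) :
    Module.finrank QI (adjoin QI {ζ}) = 2 ^ b := by
  set Np : ℕ+ := ⟨2 ^ (b + 2), by positivity⟩ with hNp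
  have hζ' : IsPrimitiveRoot ζ (Np : ℕ) := hζ
  -- finrank of ℚ⟮ζ⟯ over ℚ
  have instQ : IsCyclotomicExtension {(Np:ℕ)} ℚ (adjoin ℚ {ζ}) := aux_cyc Np hζ'
  have t2 : Module.finrank ℚ (adjoin ℚ {ζ}) = 2 ^ (b + 1) := by
    have := IsCyclotomicExtension.finrank (n := (Np:ℕ)) (K := ℚ) (L := adjoin ℚ {ζ})
      (Polynomial.cyclotomic.irreducible_rat (by positivity))
    rw [this]
    show Nat.totient (2 ^ (b + 2)) = 2 ^ (b + 1)
    rw [Nat.totient_prime_pow Nat.prime_two (by omega)]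
    simp
  -- restrictScalars equality
  have t3 : IntermediateField.restrictScalars ℚ (adjoin QI {ζ}) = adjoin ℚ {ζ} := by
    have h1 : IntermediateField.restrictScalars ℚ (adjoin QI {ζ})
        = ℚ⟮Complex.I⟯⟮ζ⟯.restrictScalars ℚ := rfl
    rw [h1]; refine (IntermediateField.adjoin_simple_adjoin_simple ℚ Complex.I ζ).trans ?_
    apply le_antisymm
    · rw [IntermediateField.adjoin_le_iff]
      rintro x (rfl | rfl)
      · -- I ∈ ℚ⟮ζ⟯
        have hx2 : (ζ ^ 2 ^ b) ^ 2 = -1 := by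
          have hne : ζ ^ 2 ^ (b + 1) ≠ 1 := by
            intro h
            have := hζ.dvd_of_pow_eq_one _ h
            have h2 : (2:ℕ) ^ (b + 2) ≤ 2 ^ (b + 1) :=
              Nat.le_of_dvd (by positivity) this
            exact absurd h2 (by simp [Nat.pow_lt_pow_iff_right])
          have hsq : (ζ ^ 2 ^ (b+1)) * (ζ ^ 2 ^ (b+1)) = 1 := by
            rw [← pow_add]
            rw [show 2 ^ (b+1) + 2 ^ (b+1) = 2 ^ (b+2) by ring]
            exact hζ.pow_eq_one
          rcases mul_self_eq_one_iff.mp hsq with h | h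
          · exact absurd h hne
          · rw [← pow_mul]; rw [show 2 ^ b * 2 = 2 ^ (b+1) by ring]; exact h
        have : (ζ ^ 2 ^ b - Complex.I) * (ζ ^ 2 ^ b + Complex.I) = 0 := by
          have : (ζ ^ 2 ^ b) ^ 2 - Complex.I ^ 2 = 0 := by
            rw [hx2, Complex.I_sq]; ring
          linear_combination this
        have hζmem : ζ ^ 2 ^ b ∈ adjoin ℚ {ζ} :=
          pow_mem (IntermediateField.mem_adjoin_simple_self ℚ ζ) _
        rcases mul_eq_zero.mp this with h | h
        · rw [sub_eq_zero] at h; rw [← h]; exact hζmem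
        · have : Complex.I = -(ζ ^ 2 ^ b) := by linear_combination h
          rw [this]; exact neg_mem hζmem
      · exact IntermediateField.mem_adjoin_simple_self ℚ x
    · apply IntermediateField.adjoin_le_iff.mpr
      intro x hx
      exact IntermediateField.subset_adjoin ℚ _ (by simp [Set.mem_singleton_iff.mp hx])
  -- tower via relfinrank
  have hle : QI ≤ adjoin ℚ {ζ} := by
    intro x hx
    rw [← t3, IntermediateField.mem_restrictScalars]
    exact (adjoin QI {ζ}).algebraMap_mem ⟨x, hx⟩
  have hE : IntermediateField.extendScalars hle = adjoin QI {ζ} := by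
    apply IntermediateField.restrictScalars_injective ℚ
    exact (IntermediateField.extendScalars_restrictScalars hle).trans t3.symm
  have t4 := IntermediateField.finrank_bot_mul_relfinrank hle
  rw [finrank_QI, t2] at t4
  have t5 := IntermediateField.relfinrank_eq_finrank_of_le hle
  rw [hE] at t5
  rw [t5] at t4
  have : (2:ℕ) ^ (b+1) = 2 * 2 ^ b := by ring
  omega


lemma pow_2b_eq (b : ℕ) {ζ : ℂ} (hζ : IsPrimitiveRoot ζ (2 ^ (b + 2))) :
    ζ ^ 2 ^ b = Complex.I ∨ ζ ^ 2 ^ b = -Complex.I := by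
  have hx2 : (ζ ^ 2 ^ b) ^ 2 = -1 := by
    have hne : ζ ^ 2 ^ (b + 1) ≠ 1 := by
      intro h
      have := hζ.dvd_of_pow_eq_one _ h
      have h2 : (2:ℕ) ^ (b + 2) ≤ 2 ^ (b + 1) := Nat.le_of_dvd (by positivity) this
      exact absurd h2 (by simp [Nat.pow_lt_pow_iff_right])
    have hsq : (ζ ^ 2 ^ (b+1)) * (ζ ^ 2 ^ (b+1)) = 1 := by
      rw [← pow_add, show 2 ^ (b+1) + 2 ^ (b+1) = 2 ^ (b+2) by ring]
      exact hζ.pow_eq_one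
    rcases mul_self_eq_one_iff.mp hsq with h | h
    · exact absurd h hne
    · rw [← pow_mul, show 2 ^ b * 2 = 2 ^ (b+1) by ring]; exact h
  have hfac : (ζ ^ 2 ^ b - Complex.I) * (ζ ^ 2 ^ b + Complex.I) = 0 := by
    have h1 : (ζ ^ 2 ^ b) ^ 2 - Complex.I ^ 2 = 0 := by rw [hx2, Complex.I_sq]; ring
    linear_combination h1
  rcases mul_eq_zero.mp hfac with h | h
  · left; linear_combination h
  · right; linear_combination h

lemma exists_exp (b : ℕ) {ζ : ℂ} (hζ : IsPrimitiveRoot ζ (2 ^ (b + 2)))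
    (τ : (adjoin QI {ζ}) ≃ₐ[QI] (adjoin QI {ζ})) :
    ∃ e : ℕ, ((τ ⟨ζ, IntermediateField.subset_adjoin QI {ζ} rfl⟩ :
        (adjoin QI {ζ})) : ℂ) = ζ ^ e ∧ (4:ℤ) ∣ (e:ℤ) - 1 := by
  haveI : NeZero (2 ^ (b + 2)) := ⟨by positivity⟩
  set ζK : (adjoin QI {ζ}) := ⟨ζ, IntermediateField.subset_adjoin QI {ζ} rfl⟩ with hζKdef
  have hζK : IsPrimitiveRoot ζK (2 ^ (b + 2)) := by
    apply IsPrimitiveRoot.coe_submonoidClass_iff.mp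
    exact hζ
  have hpow1 : (τ ζK) ^ (2 ^ (b+2)) = 1 := by
    rw [← _root_.map_pow, hζK.pow_eq_one, _root_.map_one]
  obtain ⟨e, helt, he⟩ := hζK.eq_pow_of_pow_eq_one hpow1
  refine ⟨e, ?_, ?_⟩
  · rw [← he]; push_cast; rfl
  · -- τ fixes ζK ^ 2^b
    have hmem : ζ ^ 2 ^ b ∈ QI := by
      rcases pow_2b_eq b hζ with h | h <;> rw [h]
      · exact IntermediateField.mem_adjoin_simple_self ℚ Complex.I
      · exact neg_mem (IntermediateField.mem_adjoin_simple_self ℚ Complex.I)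
    have ha : algebraMap QI (adjoin QI {ζ}) ⟨ζ ^ 2 ^ b, hmem⟩ = ζK ^ 2 ^ b := by
      apply Subtype.ext
      push_cast
      rfl
    have hfix : τ (ζK ^ 2 ^ b) = ζK ^ 2 ^ b := by rw [← ha, AlgEquiv.commutes]
    have hKpow : ζK ^ (e * 2 ^ b) = ζK ^ 2 ^ b := by
      rw [pow_mul, he, ← _root_.map_pow, hfix]
    have hle : (2:ℕ) ^ b ≤ 2 ^ (b + 2) := Nat.pow_le_pow_right (by norm_num) (by omega)
    have hKpow2 : ζK ^ (e * 2 ^ b + (2 ^ (b + 2) - 2 ^ b)) = 1 := by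
      rw [pow_add, hKpow, ← pow_add, Nat.add_sub_cancel' hle, hζK.pow_eq_one]
    have hdvd : 2 ^ (b + 2) ∣ e * 2 ^ b + (2 ^ (b + 2) - 2 ^ b) :=
      (hζK.pow_eq_one_iff_dvd _).mp hKpow2
    obtain ⟨c, hc⟩ := hdvd
    have hcZ : (e:ℤ) * 2 ^ b + (2 ^ (b + 2) - 2 ^ b) = 2 ^ (b + 2) * c := by
      have := congrArg (fun t : ℕ => (t : ℤ)) hc
      push_cast [hle] at this
      linarith [this]
    have hA : ((2:ℤ) ^ b) * ((e:ℤ) + 3) = ((2:ℤ) ^ b) * (4 * c) := by ring_nf; ring_nf at hcZ; linarith [hcZ]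
    have h43 : (e:ℤ) + 3 = 4 * c :=
      mul_left_cancel₀ (by positivity : ((2:ℤ)^b) ≠ 0) hA
    omega


lemma orderOf_gen (b : ℕ) {ζ : ℂ} (hζ : IsPrimitiveRoot ζ (2 ^ (b + 2)))
    (σ : (adjoin QI {ζ}) ≃ₐ[QI] (adjoin QI {ζ}))
    (hgen : ∀ τ : (adjoin QI {ζ}) ≃ₐ[QI] (adjoin QI {ζ}), τ ∈ Subgroup.zpowers σ) :
    orderOf σ = 2 ^ b := by
  set Np : ℕ+ := ⟨2 ^ (b + 2), by positivity⟩ with hNp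
  haveI instC : IsCyclotomicExtension {(Np:ℕ)} QI (adjoin QI {ζ}) := aux_cyc Np hζ
  haveI : FiniteDimensional QI (adjoin QI {ζ}) :=
    IsCyclotomicExtension.finiteDimensional {(Np:ℕ)} QI (adjoin QI {ζ})
  haveI : IsGalois QI (adjoin QI {ζ}) :=
    IsCyclotomicExtension.isGalois {(Np:ℕ)} QI (adjoin QI {ζ})
  rw [orderOf_eq_card_of_forall_mem_zpowers hgen,
    IsGalois.card_aut_eq_finrank,
    finrank_adjoin b hζ]

lemma gal_inj (b : ℕ) {ζ : ℂ} (hζ : IsPrimitiveRoot ζ (2 ^ (b + 2)))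
    (σ : (adjoin QI {ζ}) ≃ₐ[QI] (adjoin QI {ζ}))
    (hgen : ∀ τ : (adjoin QI {ζ}) ≃ₐ[QI] (adjoin QI {ζ}), τ ∈ Subgroup.zpowers σ)
    (j j' : Fin (2 ^ b))
    (h : (σ ^ (j:ℕ)) ⟨ζ, IntermediateField.subset_adjoin QI {ζ} rfl⟩
       = (σ ^ (j':ℕ)) ⟨ζ, IntermediateField.subset_adjoin QI {ζ} rfl⟩) : j = j' := by
  have hAH : (σ ^ (j:ℕ)).toAlgHom = (σ ^ (j':ℕ)).toAlgHom := by
    apply IntermediateField.adjoin_algHom_ext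
    intro x hx
    obtain rfl : x = ζ := hx
    exact h
  have hpow : σ ^ (j:ℕ) = σ ^ (j':ℕ) :=
    AlgEquiv.ext fun x => DFunLike.congr_fun hAH x
  have := pow_eq_pow_iff_modEq.mp hpow
  rw [orderOf_gen b hζ σ hgen] at this
  have h1 : (j:ℕ) % 2 ^ b = (j':ℕ) % 2 ^ b := this
  rw [Nat.mod_eq_of_lt j.isLt, Nat.mod_eq_of_lt j'.isLt] at h1
  exact Fin.ext h1



/-- Let `n = 2^b`, `K = ℚ(i)(ζ) = ℚ(ζ)` with `ζ` a primitive `2^(b+2)`-th root of unity,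
and `σ` a generator of `Gal(K/ℚ(i))`. Then the `n × n` matrix with `(j,k)` entry
`(1/√n)·σʲ(ζᵏ)` is unitary. -/
theorem stmt_14 (b : ℕ) (ζ : ℂ) (hζ : IsPrimitiveRoot ζ (2 ^ (b + 2)))
    (σ : (IntermediateField.adjoin QI {ζ}) ≃ₐ[QI] (IntermediateField.adjoin QI {ζ}))
    (hgen : ∀ τ : (IntermediateField.adjoin QI {ζ}) ≃ₐ[QI] (IntermediateField.adjoin QI {ζ}),
      τ ∈ Subgroup.zpowers σ) :
    (Matrix.of fun j k : Fin (2 ^ b) =>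
        (1 / (Real.sqrt (2 ^ b) : ℂ)) *
          (((σ ^ (j : ℕ))
            (⟨ζ, IntermediateField.subset_adjoin QI {ζ} rfl⟩ ^ (k : ℕ)) : 
              IntermediateField.adjoin QI {ζ}) : ℂ)) *
      (Matrix.of fun j k : Fin (2 ^ b) =>
        (1 / (Real.sqrt (2 ^ b) : ℂ)) *
          (((σ ^ (j : ℕ))
            (⟨ζ, IntermediateField.subset_adjoin QI {ζ} rfl⟩ ^ (k : ℕ)) :
              IntermediateField.adjoin QI {ζ}) : ℂ))ᴴ = 1 := by
  have hN0 : (2:ℕ) ^ (b + 2) ≠ 0 := by positivity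
  have hζ0 : ζ ≠ 0 := hζ.ne_zero hN0
  have hζnorm : ‖ζ‖ = 1 := hζ.norm'_eq_one hN0
  set ζK : (adjoin QI {ζ}) := ⟨ζ, IntermediateField.subset_adjoin QI {ζ} rfl⟩ with hζKdef
  choose e he hmod using fun j : Fin (2 ^ b) => exists_exp b hζ (σ ^ (j : ℕ))
  set c : ℂ := 1 / (Real.sqrt (2 ^ b) : ℂ) with hc
  have hcstar : star c = c := by
    rw [hc]; simp [Complex.star_def, Complex.conj_ofReal]
  have hcc : c * c * (2 ^ b : ℂ) = 1 := by
    rw [hc, div_mul_div_comm, one_mul, ← Complex.ofReal_mul,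
      Real.mul_self_sqrt (by positivity)]
    push_cast
    field_simp
  ext j j'
  rw [Matrix.mul_apply]
  have hterm : ∀ k : Fin (2 ^ b),
      (Matrix.of fun j k : Fin (2 ^ b) => c * (((σ ^ (j : ℕ)) (ζK ^ (k : ℕ)) :
        (adjoin QI {ζ})) : ℂ)) j k *
      (Matrix.of fun j k : Fin (2 ^ b) => c * (((σ ^ (j : ℕ)) (ζK ^ (k : ℕ)) :
        (adjoin QI {ζ})) : ℂ))ᴴ k j'
      = (c * c) * ((ζ ^ (e j) * (ζ ^ (e j'))⁻¹) ^ (k : ℕ)) := by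
    intro k
    rw [Matrix.conjTranspose_apply, Matrix.of_apply, Matrix.of_apply]
    have hval : ∀ i : Fin (2 ^ b), (((σ ^ (i : ℕ)) (ζK ^ (k : ℕ)) :
        (adjoin QI {ζ})) : ℂ) = (ζ ^ (e i)) ^ (k : ℕ) := by
      intro i
      rw [_root_.map_pow]
      push_cast
      rw [he i]
    rw [hval j, hval j', star_mul', hcstar]
    have hstar : star ((ζ ^ e j') ^ (k:ℕ)) = ((ζ ^ (e j'))⁻¹) ^ (k:ℕ) := by
      have : ((ζ ^ e j') ^ (k:ℕ))⁻¹ = star ((ζ ^ e j') ^ (k:ℕ)) :=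
        Complex.inv_eq_conj (by rw [norm_pow, norm_pow, hζnorm, one_pow, one_pow])
      rw [← this, ← inv_pow]
    rw [hstar, mul_pow]
    ring
  rw [Finset.sum_congr rfl (fun k _ => hterm k)]
  rw [← Finset.mul_sum]
  set w : ℂ := ζ ^ (e j) * (ζ ^ (e j'))⁻¹ with hw
  have hζe0 : ∀ i : Fin (2^b), ζ ^ (e i) ≠ 0 := fun i => pow_ne_zero _ hζ0
  rcases eq_or_ne j j' with rfl | hne
  · have hw1 : w = 1 := mul_inv_cancel₀ (hζe0 j)
    rw [hw1]
    simp only [one_pow, Finset.sum_const, Finset.card_univ, Fintype.card_fin, nsmul_eq_mul,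
      mul_one, Matrix.one_apply_eq]
    rw [show ((2^b : ℕ) : ℂ) = (2^b : ℂ) by push_cast; ring]
    exact hcc
  · rw [Matrix.one_apply_ne hne]
    have hwne : w ≠ 1 := by
      intro h1
      apply hne
      apply gal_inj b hζ σ hgen j j'
      have hu : ζ ^ (e j) = ζ ^ (e j') := by
        have h2 : ζ ^ (e j) * (ζ ^ (e j'))⁻¹ = 1 := h1
        field_simp at h2
        exact h2
      have : ((((σ ^ (j:ℕ)) ζK) : (adjoin QI {ζ})) : ℂ)
           = ((((σ ^ (j':ℕ)) ζK) : (adjoin QI {ζ})) : ℂ) := by rw [he j, he j', hu]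
      exact Subtype.ext this
    have hwn : w ^ (2 ^ b : ℕ) = 1 := by
      have hz : w = ζ ^ ((e j : ℤ) - (e j' : ℤ)) := by
        rw [hw, zpow_sub₀ hζ0, zpow_natCast, zpow_natCast, div_eq_mul_inv]
      rw [hz, ← zpow_natCast (ζ ^ ((e j : ℤ) - (e j' : ℤ))) (2 ^ b), ← _root_.zpow_mul]
      apply (hζ.zpow_eq_one_iff_dvd _).mpr
      obtain ⟨t, ht⟩ : (4:ℤ) ∣ ((e j : ℤ) - (e j' : ℤ)) := by
        have h1 := hmod j
        have h2 := hmod j'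
        omega
      refine ⟨t, ?_⟩
      rw [ht]
      push_cast
      ring
    have := geom_sum_eq hwne (2 ^ b)
    rw [Fin.sum_univ_eq_sum_range (fun i => w ^ i), this, hwn]
    simp
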